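/- For every p with 0 < p < 1, π(p,p) ≤ 1 - (2√3 - 3)/max(3, 1/(p(1-p)) - 3); in particular π(p,p) < 1. -/

import Mathlib

open MeasureTheory ProbabilityTheory Real


set_option maxHeartbeats 2000000 in
/-- Exact constants for the quartic minorant of the indicator of `(-∞,0)`. -/
lemma pz_poly_aux : ∃ c1 c2 : ℝ, 0 < c2 ∧ c2 ^ 2 = 4 * (2 * Real.sqrt 3 - 3) ∧
    ∀ x : ℝ, c2 * x ^ 2 - x ^ 4 - c1 * x ≤ (if x < 0 then (1 : ℝ) else 0) := by
  have h3 : (Real.sqrt 3) ^ 2 = 3 := Real.sq_sqrt (by norm_num)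
  have h3pos : (1:ℝ) < Real.sqrt 3 := by nlinarith [Real.sqrt_nonneg 3]
  have h3lt : Real.sqrt 3 < 2 := by nlinarith [Real.sqrt_nonneg 3]
  set r3 := Real.sqrt 3 with hr3
  set t : ℝ := Real.sqrt (3 + 2 * r3) / 3 with htdef
  have htsq : t ^ 2 = (3 + 2 * r3) / 9 := by
    rw [htdef, div_pow, Real.sq_sqrt (by nlinarith : (0:ℝ) ≤ 3 + 2 * r3)]; norm_num
  have htpos : 0 < t := by
    rw [htdef]
    have : 0 < Real.sqrt (3 + 2 * r3) := Real.sqrt_pos.mpr (by nlinarith)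
    linarith
  have htlt1 : t < 1 := by nlinarith
  have ht3 : 1 / 3 < t ^ 2 := by nlinarith
  have h27 : 27 * t ^ 4 - 18 * t ^ 2 - 1 = 0 := by
    have : t ^ 4 = ((3 + 2 * r3) / 9) ^ 2 := by rw [← htsq]; ring
    rw [this, htsq]; field_simp; nlinarith
  -- definitions
  set y1 : ℝ := Real.sqrt t with hy1def
  have hy1sq : y1 ^ 2 = t := Real.sq_sqrt htpos.le
  have hy1pos : 0 < y1 := Real.sqrt_pos.mpr htpos
  set c2 : ℝ := 3 * t - 1 / t with hc2def
  have hc2pos : 0 < c2 := by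
    rw [hc2def, sub_pos, div_lt_iff₀ htpos]; nlinarith
  set x0 : ℝ := Real.sqrt (c2 / 3) with hx0def
  have hx0sq : x0 ^ 2 = c2 / 3 := Real.sq_sqrt (by positivity)
  have hx0pos : 0 < x0 := Real.sqrt_pos.mpr (by positivity)
  set c1 : ℝ := 2 * x0 ^ 3 with hc1def
  -- key algebraic identity
  have hkey : x0 ^ 3 = y1 * (1 / t - t) := by
    have h1 : (x0 ^ 3) ^ 2 = (y1 * (1 / t - t)) ^ 2 := by
      have l : (x0 ^ 3) ^ 2 = (c2 / 3) ^ 3 := by rw [← hx0sq]; ring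
      have r : (y1 * (1 / t - t)) ^ 2 = t * (1 / t - t) ^ 2 := by rw [mul_pow, hy1sq]
      rw [l, r, hc2def]
      field_simp
      nlinarith [h27]
    have hbn : 0 ≤ y1 * (1 / t - t) := by
      apply mul_nonneg hy1pos.le
      have : t ≤ 1 / t := by
        rw [le_div_iff₀ htpos]; nlinarith
      linarith
    exact (sq_eq_sq₀ (by positivity) hbn).mp h1
  have hc2sq : c2 ^ 2 = 4 * (2 * r3 - 3) := by
    have hden : (0:ℝ) < 3 + 2 * r3 := by linarith
    have hi : (1:ℝ) / t ^ 2 = 6 * r3 - 9 := by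
      rw [htsq, one_div_div, div_eq_iff hden.ne']; nlinarith
    have : c2 ^ 2 = 9 * t ^ 2 - 6 + 1 / t ^ 2 := by
      rw [hc2def]; field_simp; ring
    rw [this, hi, htsq]; ring
  refine ⟨c1, c2, hc2pos, hc2sq, fun x => ?_⟩
  by_cases hx : x < 0
  · simp only [hx, if_true]
    have y := -x
    have hid : x ^ 4 - c2 * x ^ 2 + c1 * x + 1
        = (-x - y1) ^ 2 * ((-x) ^ 2 + 2 * y1 * (-x) + 1 / t) := by
      have hc1' : c1 = 2 * y1 * (1 / t - t) := by rw [hc1def, hkey]; ring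
      rw [hc1', hc2def, ← hy1sq]
      field_simp
      ring
    have hnx : 0 < -x := neg_pos.mpr hx
    have h1 : 0 ≤ (-x - y1) ^ 2 * ((-x) ^ 2 + 2 * y1 * (-x) + 1 / t) := by
      apply mul_nonneg (sq_nonneg _)
      have h2 : 0 ≤ 2 * y1 * (-x) := by positivity
      have h4 : (0:ℝ) < 1 / t := by positivity
      nlinarith [sq_nonneg x]
    rw [← hid] at h1
    linarith
  · simp only [hx, if_false]
    push_neg at hx
    have hid : c2 * x ^ 2 - x ^ 4 - c1 * x = -(x * ((x - x0) ^ 2 * (x + 2 * x0))) := by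
      have hc2' : c2 = 3 * x0 ^ 2 := by rw [hx0sq]; ring
      rw [hc2', hc1def]; ring
    rw [hid]
    have : 0 ≤ x * ((x - x0) ^ 2 * (x + 2 * x0)) := by positivity
    linarith

lemma my_integrable_of_bound {Ω : Type*} [MeasurableSpace Ω] (μ : Measure Ω) [IsFiniteMeasure μ]
    {f : Ω → ℝ} (hf : Measurable f) (C : ℝ) (h : ∀ ω, |f ω| ≤ C) : Integrable f μ :=
  Integrable.mono' (integrable_const C) hf.aestronglyMeasurable
    (ae_of_all _ fun ω => by simpa [Real.norm_eq_abs] using h ω)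

set_option maxHeartbeats 1000000 in
lemma pz_ineq {Ω : Type*} [MeasurableSpace Ω] (μ : Measure Ω) [IsProbabilityMeasure μ]
    {X : Ω → ℝ} (hX : Measurable X) (hb : ∀ ω, |X ω| ≤ 1)
    (h0 : ∫ ω, X ω ∂μ = 0) :
    (2 * Real.sqrt 3 - 3) * (∫ ω, (X ω) ^ 2 ∂μ) ^ 2 ≤
      (∫ ω, (X ω) ^ 4 ∂μ) * (μ {ω | X ω < 0}).toReal := by
  have hpowm : ∀ k : ℕ, Measurable fun ω => X ω ^ k := fun k => hX.pow_const k
  have hint : ∀ k : ℕ, Integrable (fun ω => X ω ^ k) μ := by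
    intro k
    refine my_integrable_of_bound μ (hpowm k) 1 fun ω => ?_
    rw [abs_pow]
    exact pow_le_one₀ (abs_nonneg _) (hb ω)
  set σ2 := ∫ ω, (X ω) ^ 2 ∂μ with hσ2
  set m4 := ∫ ω, (X ω) ^ 4 ∂μ with hm4
  set τ := (μ {ω | X ω < 0}).toReal with hτ
  have hσ2nn : 0 ≤ σ2 := integral_nonneg fun ω => sq_nonneg _
  have hm4nn : 0 ≤ m4 := integral_nonneg fun ω => by positivity
  have hτnn : 0 ≤ τ := ENNReal.toReal_nonneg
  have hσ2m4 : σ2 ^ 2 ≤ m4 := by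
    have h1 : (0:ℝ) ≤ ∫ ω, (X ω ^ 2 - σ2) ^ 2 ∂μ :=
      integral_nonneg fun ω => sq_nonneg _
    have h2 : ∫ ω, (X ω ^ 2 - σ2) ^ 2 ∂μ = m4 - σ2 ^ 2 := by
      have e : (fun ω => (X ω ^ 2 - σ2) ^ 2)
          = fun ω => (X ω ^ 4 - (2 * σ2) * X ω ^ 2) + σ2 ^ 2 :=
        funext fun ω => by ring
      rw [e, integral_add (show Integrable (fun ω => X ω ^ 4 - 2 * σ2 * X ω ^ 2) μ from
          (hint 4).sub ((hint 2).const_mul _)) (integrable_const _),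
        integral_sub (hint 4) (show Integrable (fun ω => 2 * σ2 * X ω ^ 2) μ from
          (hint 2).const_mul _), integral_const_mul, integral_const]
      simp only [measure_univ, probReal_univ, ENNReal.toReal_one, smul_eq_mul, one_mul]
      ring
    linarith [h2 ▸ h1]
  rcases eq_or_lt_of_le hσ2nn with hσ0 | hσpos
  · rw [← hσ0]; simpa using mul_nonneg hm4nn hτnn
  have hm4pos : 0 < m4 := lt_of_lt_of_le (by positivity) hσ2m4
  obtain ⟨c1, c2, hc2pos, hc2sq, hpoly⟩ := pz_poly_aux
  set s := Real.sqrt (c2 * σ2 / (2 * m4)) with hsdef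
  have hssq : s ^ 2 = c2 * σ2 / (2 * m4) := Real.sq_sqrt (by positivity)
  have hspos : 0 < s := Real.sqrt_pos.mpr (by positivity)
  have hmeasset : MeasurableSet {ω | X ω < 0} := measurableSet_lt hX measurable_const
  have hptwise : ∀ ω, (c2 * s ^ 2) * X ω ^ 2 - s ^ 4 * X ω ^ 4 - (c1 * s) * X ω ≤
      Set.indicator {ω' | X ω' < 0} 1 ω := by
    intro ω
    have hp := hpoly (s * X ω)
    by_cases hω : X ω < 0
    · have hsx : s * X ω < 0 := mul_neg_of_pos_of_neg hspos hω
      rw [if_pos hsx] at hp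
      simp only [Set.indicator_of_mem (show ω ∈ {ω' | X ω' < 0} from hω), Pi.one_apply]
      calc (c2 * s ^ 2) * X ω ^ 2 - s ^ 4 * X ω ^ 4 - (c1 * s) * X ω
          = c2 * (s * X ω) ^ 2 - (s * X ω) ^ 4 - c1 * (s * X ω) := by ring
        _ ≤ 1 := hp
    · have hsx : ¬ (s * X ω < 0) := by
        push_neg at hω ⊢
        exact mul_nonneg hspos.le hω
      rw [if_neg hsx] at hp
      simp only [Set.indicator_of_notMem (show ω ∉ {ω' | X ω' < 0} from hω)]
      calc (c2 * s ^ 2) * X ω ^ 2 - s ^ 4 * X ω ^ 4 - (c1 * s) * X ω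
          = c2 * (s * X ω) ^ 2 - (s * X ω) ^ 4 - c1 * (s * X ω) := by ring
        _ ≤ 0 := hp
  have hintL : Integrable
      (fun ω => (c2 * s ^ 2) * X ω ^ 2 - s ^ 4 * X ω ^ 4 - (c1 * s) * X ω) μ :=
    (((hint 2).const_mul _).sub ((hint 4).const_mul _)).sub
      ((my_integrable_of_bound μ hX 1 hb).const_mul _)
  have hindint : Integrable (Set.indicator {ω' | X ω' < 0} (1 : Ω → ℝ)) μ :=
    (integrable_const (1:ℝ)).indicator hmeasset
  have hmono : ∫ ω, ((c2 * s ^ 2) * X ω ^ 2 - s ^ 4 * X ω ^ 4 - (c1 * s) * X ω) ∂μ ≤ τ := by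
    have := integral_mono hintL hindint hptwise
    rwa [integral_indicator_one hmeasset] at this
  have hcomp : ∫ ω, ((c2 * s ^ 2) * X ω ^ 2 - s ^ 4 * X ω ^ 4 - (c1 * s) * X ω) ∂μ
      = (c2 * s ^ 2) * σ2 - s ^ 4 * m4 := by
    rw [integral_sub (show Integrable (fun ω => (c2 * s ^ 2) * X ω ^ 2 - s ^ 4 * X ω ^ 4) μ from
        ((hint 2).const_mul _).sub ((hint 4).const_mul _))
      (show Integrable (fun ω => (c1 * s) * X ω) μ from
        (my_integrable_of_bound μ hX 1 hb).const_mul _),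
      integral_sub (show Integrable (fun ω => (c2 * s ^ 2) * X ω ^ 2) μ from (hint 2).const_mul _)
        (show Integrable (fun ω => s ^ 4 * X ω ^ 4) μ from (hint 4).const_mul _),
      integral_const_mul, integral_const_mul, integral_const_mul, h0]
    ring
  rw [hcomp] at hmono
  have hval : ((c2 * s ^ 2) * σ2 - s ^ 4 * m4) * m4 = (2 * Real.sqrt 3 - 3) * σ2 ^ 2 := by
    have hs4 : s ^ 4 = (c2 * σ2 / (2 * m4)) ^ 2 := by rw [← hssq]; ring
    rw [hssq, hs4]
    field_simp
    linear_combination hc2sq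
  calc (2 * Real.sqrt 3 - 3) * σ2 ^ 2 = ((c2 * s ^ 2) * σ2 - s ^ 4 * m4) * m4 := hval.symm
    _ ≤ τ * m4 := mul_le_mul_of_nonneg_right hmono hm4nn
    _ = m4 * τ := mul_comm _ _

set_option maxHeartbeats 2000000 in
/-- Key step: for fixed weights, the success probability is at most `1 - δ`. -/
lemma pi_key {Ω : Type*} [MeasurableSpace Ω]
    (μ : Measure Ω) [IsProbabilityMeasure μ] (p : ℝ) (hp0 : 0 < p) (hp1 : p < 1)
    (β : ℕ → Ω → ℝ) (hmeas : ∀ i, Measurable (β i))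
    (hval : ∀ i ω, β i ω = 0 ∨ β i ω = 1)
    (hβp : ∀ i, μ {ω | β i ω = 1} = ENNReal.ofReal p)
    (hindep : iIndepFun β μ)
    (c : ℕ → ℝ) (hc0 : ∀ i, 0 ≤ c i) (hcsum : (∑' i, c i) = 1) :
    (μ {ω | p ≤ ∑' i, c i * β i ω}).toReal ≤
      1 - (2 * Real.sqrt 3 - 3) / max 3 (1 / (p * (1 - p)) - 3) := by
  set κ := 2 * Real.sqrt 3 - 3 with hκdef
  set M := max 3 (1 / (p * (1 - p)) - 3) with hMdef
  have hpq : 0 < p * (1 - p) := mul_pos hp0 (by linarith)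
  set pq := p * (1 - p) with hpqdef
  have hM3 : (3:ℝ) ≤ M := le_max_left _ _
  have hMge : 1 / pq - 3 ≤ M := le_max_right _ _
  -- summability of c
  have hsummc : Summable c := by
    by_contra h
    rw [tsum_eq_zero_of_not_summable h] at hcsum
    norm_num at hcsum
  have hci1 : ∀ i, c i ≤ 1 := fun i => hcsum ▸ hsummc.le_tsum i fun j _ => hc0 j
  have hβ0 : ∀ i ω, 0 ≤ β i ω := fun i ω => by rcases hval i ω with h | h <;> rw [h] <;> norm_num
  have hβ1 : ∀ i ω, β i ω ≤ 1 := fun i ω => by rcases hval i ω with h | h <;> rw [h] <;> norm_num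
  set S : Ω → ℝ := fun ω => ∑' i, c i * β i ω with hSdef
  have hsummS : ∀ ω, Summable fun i => c i * β i ω := fun ω =>
    Summable.of_nonneg_of_le (fun i => mul_nonneg (hc0 i) (hβ0 i ω))
      (fun i => by nlinarith [hβ1 i ω, hc0 i, hβ0 i ω]) hsummc
  -- centered variables
  set Z : ℕ → Ω → ℝ := fun i ω => c i * (β i ω - p) with hZdef
  have hZmeas : ∀ i, Measurable (Z i) := fun i => ((hmeas i).sub_const p).const_mul _
  have hZbd : ∀ i ω, |Z i ω| ≤ c i := by
    intro i ω
    rw [hZdef, abs_mul, abs_of_nonneg (hc0 i)]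
    have : |β i ω - p| ≤ 1 := by
      rw [abs_le]; constructor <;> nlinarith [hβ0 i ω, hβ1 i ω]
    nlinarith [hc0 i, abs_nonneg (β i ω - p)]
  set Y : ℕ → Ω → ℝ := fun n => ∑ j ∈ Finset.range n, Z j with hYdef
  have hYapp : ∀ n ω, Y n ω = ∑ j ∈ Finset.range n, Z j ω := by
    intro n ω; rw [hYdef]; exact Finset.sum_apply ω (Finset.range n) Z
  have hYmeas : ∀ n, Measurable (Y n) := by
    intro n
    have h : Y n = fun ω => ∑ j ∈ Finset.range n, Z j ω := funext fun ω => hYapp n ω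
    rw [h]
    exact Finset.measurable_sum (Finset.range n) fun i _ => hZmeas i
  have hYbd : ∀ n ω, |Y n ω| ≤ 1 := by
    intro n ω
    rw [hYapp]
    calc |∑ j ∈ Finset.range n, Z j ω| ≤ ∑ j ∈ Finset.range n, |Z j ω| :=
          Finset.abs_sum_le_sum_abs _ _
      _ ≤ ∑ j ∈ Finset.range n, c j := Finset.sum_le_sum fun i _ => hZbd i ω
      _ ≤ ∑' j, c j := hsummc.sum_le_tsum _ (fun i _ => hc0 i)
      _ = 1 := hcsum
  set X : Ω → ℝ := fun ω => S ω - p with hXdef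
  have hXsum : ∀ ω, HasSum (fun i => Z i ω) (X ω) := by
    intro ω
    have h1 : HasSum (fun i => c i * β i ω) (S ω) := (hsummS ω).hasSum
    have h2 : HasSum c 1 := hcsum ▸ hsummc.hasSum
    have h3 := h1.sub (h2.mul_right p)
    rw [one_mul] at h3
    simpa [hZdef, mul_sub] using h3
  have hXlim : ∀ ω, Filter.Tendsto (fun n => Y n ω) Filter.atTop (nhds (X ω)) := by
    intro ω
    have := (hXsum ω).tendsto_sum_nat
    simpa [← hYapp] using this
  have hSmeas : Measurable S := by
    have h1 : ∀ n, Measurable fun ω => Y n ω + p := fun n => (hYmeas n).add_const p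
    have h2 : Filter.Tendsto (fun n => fun ω => Y n ω + p) Filter.atTop (nhds S) := by
      rw [tendsto_pi_nhds]
      intro ω
      have := (hXlim ω).add_const p
      simpa [hXdef] using this
    exact measurable_of_tendsto_metrizable h1 h2
  have hXmeas : Measurable X := hSmeas.sub_const p
  have hXbd : ∀ ω, |X ω| ≤ 1 := by
    intro ω
    have h1 : Filter.Tendsto (fun n => |Y n ω|) Filter.atTop (nhds |X ω|) :=
      (hXlim ω).abs
    exact le_of_tendsto h1 (Filter.Eventually.of_forall fun n => hYbd n ω)
  -- integrability of everything in sight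
  have hYint : ∀ n (k : ℕ), Integrable (fun ω => Y n ω ^ k) μ := fun n k =>
    my_integrable_of_bound μ ((hYmeas n).pow_const k) 1 fun ω => by
      rw [abs_pow]; exact pow_le_one₀ (abs_nonneg _) (hYbd n ω)
  have hZint : ∀ i (k : ℕ), Integrable (fun ω => Z i ω ^ k) μ := fun i k =>
    my_integrable_of_bound μ ((hZmeas i).pow_const k) 1 fun ω => by
      rw [abs_pow]
      exact pow_le_one₀ (abs_nonneg _) ((hZbd i ω).trans (hci1 i))
  have hYZint : ∀ n (a b : ℕ), Integrable (fun ω => Y n ω ^ a * Z n ω ^ b) μ := fun n a b =>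
    my_integrable_of_bound μ (((hYmeas n).pow_const a).mul ((hZmeas n).pow_const b)) 1
      fun ω => by
        rw [abs_mul, abs_pow, abs_pow]
        have h1 : |Y n ω| ^ a ≤ 1 := pow_le_one₀ (abs_nonneg _) (hYbd n ω)
        have h2 : |Z n ω| ^ b ≤ 1 := pow_le_one₀ (abs_nonneg _) ((hZbd n ω).trans (hci1 n))
        nlinarith [pow_nonneg (abs_nonneg (Y n ω)) a, pow_nonneg (abs_nonneg (Z n ω)) b]
  -- mean of β i
  have hβE : ∀ i, ∫ ω, β i ω ∂μ = p := by
    intro i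
    have hset : MeasurableSet {ω | β i ω = 1} := hmeas i (measurableSet_singleton 1)
    have hfe : β i = Set.indicator {ω | β i ω = 1} (fun _ => (1:ℝ)) := by
      funext ω
      rcases hval i ω with h | h
      · rw [h, Set.indicator_of_notMem]
        simp only [Set.mem_setOf_eq, h]
        norm_num
      · rw [h, Set.indicator_of_mem]
        exact h
    calc ∫ ω, β i ω ∂μ = ∫ ω, Set.indicator {ω' | β i ω' = 1} (fun _ => (1:ℝ)) ω ∂μ := by
          rw [← hfe]
      _ = (μ {ω | β i ω = 1}).toReal := integral_indicator_one hset
      _ = p := by rw [hβp i, ENNReal.toReal_ofReal hp0.le]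
  have hβint : ∀ i, Integrable (β i) μ := fun i =>
    my_integrable_of_bound μ (hmeas i) 1 fun ω => by
      rw [abs_of_nonneg (hβ0 i ω)]; exact hβ1 i ω
  -- moments of β i - p
  have hbmom : ∀ i (k : ℕ), ∫ ω, (β i ω - p) ^ k ∂μ = (1-p) * (-p)^k + p * (1-p)^k := by
    intro i k
    have hptw : (fun ω => (β i ω - p) ^ k)
        = fun ω => (-p)^k + ((1-p)^k - (-p)^k) * β i ω := by
      funext ω
      rcases hval i ω with h | h <;> rw [h] <;> ring_nf
    rw [hptw, integral_add (integrable_const _) ((hβint i).const_mul _),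
      integral_const_mul, integral_const, hβE i]
    simp only [measure_univ, probReal_univ, ENNReal.toReal_one, smul_eq_mul, one_mul]
    ring
  have hZmom : ∀ i (k : ℕ), ∫ ω, Z i ω ^ k ∂μ = c i ^ k * ((1-p) * (-p)^k + p * (1-p)^k) := by
    intro i k
    have hptw : (fun ω => Z i ω ^ k) = fun ω => c i ^ k * (β i ω - p) ^ k := by
      funext ω; rw [hZdef]; rw [mul_pow]
    rw [hptw, integral_const_mul, hbmom i k]
  have hZ1 : ∀ i, ∫ ω, Z i ω ∂μ = 0 := by
    intro i
    have := hZmom i 1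
    simp only [pow_one] at this
    rw [this]; ring
  have hZ2 : ∀ i, ∫ ω, Z i ω ^ 2 ∂μ = c i ^ 2 * pq := by
    intro i; rw [hZmom i 2, hpqdef]; ring
  have hZ4 : ∀ i, ∫ ω, Z i ω ^ 4 ∂μ = c i ^ 4 * (pq * (1 - 3 * pq)) := by
    intro i; rw [hZmom i 4, hpqdef]; ring
  -- independence of partial sums and next term
  have hZindep : iIndepFun Z μ :=
    hindep.comp (fun i x => c i * (x - p)) fun i => (measurable_id.sub_const p).const_mul _
  have hYZindep : ∀ n, IndepFun (Y n) (Z n) μ := fun n =>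
    hZindep.indepFun_sum_range_succ hZmeas n
  have hYZmul : ∀ n (a b : ℕ), ∫ ω, Y n ω ^ a * Z n ω ^ b ∂μ
      = (∫ ω, Y n ω ^ a ∂μ) * ∫ ω, Z n ω ^ b ∂μ := by
    intro n a b
    have hind : IndepFun (fun ω => Y n ω ^ a) (fun ω => Z n ω ^ b) μ :=
      (hYZindep n).comp (measurable_id.pow_const a) (measurable_id.pow_const b)
    exact hind.integral_fun_mul_eq_mul_integral (hYint n a).aestronglyMeasurable
      (hZint n b).aestronglyMeasurable
  -- first moment of Y n
  have hEY1 : ∀ n, ∫ ω, Y n ω ∂μ = 0 := by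
    intro n
    induction n with
    | zero => simp [hYapp]
    | succ n ih =>
      have hstep : (fun ω => Y (n+1) ω) = fun ω => Y n ω + Z n ω := by
        funext ω; rw [hYapp, hYapp, Finset.sum_range_succ]
      rw [hstep, integral_add (by simpa using hYint n 1) (by simpa using hZint n 1), ih, hZ1]
      ring
  -- second moment
  have hEY2 : ∀ n, ∫ ω, Y n ω ^ 2 ∂μ = pq * ∑ i ∈ Finset.range n, c i ^ 2 := by
    intro n
    induction n with
    | zero => simp [hYapp]
    | succ n ih =>
      have hstep : (fun ω => Y (n+1) ω ^ 2)
          = fun ω => (Y n ω ^ 2 + 2 * (Y n ω ^ 1 * Z n ω ^ 1)) + Z n ω ^ 2 := by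
        funext ω; rw [hYapp, hYapp, Finset.sum_range_succ]; ring
      rw [hstep, integral_add (show Integrable
            (fun ω => Y n ω ^ 2 + 2 * (Y n ω ^ 1 * Z n ω ^ 1)) μ from
            (hYint n 2).add ((hYZint n 1 1).const_mul 2)) (hZint n 2),
        integral_add (hYint n 2) (show Integrable
            (fun ω => 2 * (Y n ω ^ 1 * Z n ω ^ 1)) μ from (hYZint n 1 1).const_mul 2),
        integral_const_mul, hYZmul n 1 1, ih, hZ2, Finset.sum_range_succ]
      simp only [pow_one, hEY1 n]
      ring
  -- fourth moment
  have hEY4 : ∀ n, ∫ ω, Y n ω ^ 4 ∂μ = pq * (1 - 6 * pq) * ∑ i ∈ Finset.range n, c i ^ 4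
      + 3 * pq ^ 2 * (∑ i ∈ Finset.range n, c i ^ 2) ^ 2 := by
    intro n
    induction n with
    | zero => simp [hYapp]
    | succ n ih =>
      have hstep : (fun ω => Y (n+1) ω ^ 4)
          = fun ω => (((Y n ω ^ 4 + 4 * (Y n ω ^ 3 * Z n ω ^ 1))
              + 6 * (Y n ω ^ 2 * Z n ω ^ 2)) + 4 * (Y n ω ^ 1 * Z n ω ^ 3)) + Z n ω ^ 4 := by
        funext ω; rw [hYapp, hYapp, Finset.sum_range_succ]; ring
      rw [hstep,
        integral_add (show Integrable (fun ω => ((Y n ω ^ 4 + 4 * (Y n ω ^ 3 * Z n ω ^ 1))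
              + 6 * (Y n ω ^ 2 * Z n ω ^ 2)) + 4 * (Y n ω ^ 1 * Z n ω ^ 3)) μ from
          (((hYint n 4).add ((hYZint n 3 1).const_mul 4)).add
            ((hYZint n 2 2).const_mul 6)).add ((hYZint n 1 3).const_mul 4)) (hZint n 4),
        integral_add (show Integrable (fun ω => (Y n ω ^ 4 + 4 * (Y n ω ^ 3 * Z n ω ^ 1))
              + 6 * (Y n ω ^ 2 * Z n ω ^ 2)) μ from
          ((hYint n 4).add ((hYZint n 3 1).const_mul 4)).add ((hYZint n 2 2).const_mul 6))
          (show Integrable (fun ω => 4 * (Y n ω ^ 1 * Z n ω ^ 3)) μ from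
            (hYZint n 1 3).const_mul 4),
        integral_add (show Integrable (fun ω => Y n ω ^ 4 + 4 * (Y n ω ^ 3 * Z n ω ^ 1)) μ from
          (hYint n 4).add ((hYZint n 3 1).const_mul 4))
          (show Integrable (fun ω => 6 * (Y n ω ^ 2 * Z n ω ^ 2)) μ from
            (hYZint n 2 2).const_mul 6),
        integral_add (hYint n 4) (show Integrable (fun ω => 4 * (Y n ω ^ 3 * Z n ω ^ 1)) μ from
          (hYZint n 3 1).const_mul 4),
        integral_const_mul, integral_const_mul, integral_const_mul,
        hYZmul n 3 1, hYZmul n 2 2, hYZmul n 1 3, ih, hZ2, hZ4, Finset.sum_range_succ,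
        Finset.sum_range_succ]
      have hz1 : ∫ ω, Z n ω ^ 1 ∂μ = 0 := by simpa using hZ1 n
      have hy1 : ∫ ω, Y n ω ^ 1 ∂μ = 0 := by simpa using hEY1 n
      rw [hz1, hy1, hEY2 n]
      ring
  -- summability of powers
  have hsummc2 : Summable fun i => c i ^ 2 :=
    hsummc.of_nonneg_of_le (fun i => sq_nonneg _) fun i => by
      simpa using pow_le_pow_of_le_one (hc0 i) (hci1 i) (by norm_num : 1 ≤ 2)
  have hsummc4 : Summable fun i => c i ^ 4 :=
    hsummc.of_nonneg_of_le (fun i => by positivity) fun i => by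
      simpa using pow_le_pow_of_le_one (hc0 i) (hci1 i) (by norm_num : 1 ≤ 4)
  set A := ∑' i, c i ^ 2 with hAdef
  set B := ∑' i, c i ^ 4 with hBdef
  have hAt : Filter.Tendsto (fun n => ∑ i ∈ Finset.range n, c i ^ 2) Filter.atTop (nhds A) :=
    hsummc2.hasSum.tendsto_sum_nat
  have hBt : Filter.Tendsto (fun n => ∑ i ∈ Finset.range n, c i ^ 4) Filter.atTop (nhds B) :=
    hsummc4.hasSum.tendsto_sum_nat
  -- dominated convergence
  have hDCT : ∀ k : ℕ, Filter.Tendsto (fun n => ∫ ω, Y n ω ^ k ∂μ) Filter.atTop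
      (nhds (∫ ω, X ω ^ k ∂μ)) := by
    intro k
    refine tendsto_integral_of_dominated_convergence (fun _ => (1:ℝ))
      (fun n => ((hYmeas n).pow_const k).aestronglyMeasurable) (integrable_const 1)
      (fun n => Filter.Eventually.of_forall fun ω => ?_)
      (Filter.Eventually.of_forall fun ω => ?_)
    · rw [Real.norm_eq_abs, abs_pow]
      exact pow_le_one₀ (abs_nonneg _) (hYbd n ω)
    · exact (hXlim ω).pow k
  have hEX1 : ∫ ω, X ω ∂μ = 0 := by
    have t1 := hDCT 1
    simp only [pow_one, hEY1] at t1
    exact tendsto_nhds_unique t1 tendsto_const_nhds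
  have hEX2 : ∫ ω, X ω ^ 2 ∂μ = pq * A := by
    have t2 := hDCT 2
    simp only [hEY2] at t2
    exact tendsto_nhds_unique t2 (hAt.const_mul pq)
  have hEX4 : ∫ ω, X ω ^ 4 ∂μ = pq * (1 - 6 * pq) * B + 3 * pq ^ 2 * A ^ 2 := by
    have t4 := hDCT 4
    simp only [hEY4] at t4
    exact tendsto_nhds_unique t4 ((hBt.const_mul _).add ((hAt.pow 2).const_mul (3 * pq ^ 2)))
  -- bounds on tsums
  have hAnn : 0 ≤ A := tsum_nonneg fun i => sq_nonneg _
  have hBnn : 0 ≤ B := tsum_nonneg fun i => by positivity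
  have hApos : 0 < A := by
    have hex : ∃ i, c i ≠ 0 := by
      by_contra h
      push_neg at h
      rw [tsum_congr fun i => h i, tsum_zero] at hcsum
      norm_num at hcsum
    obtain ⟨i, hi⟩ := hex
    have h1 : c i ^ 2 ≤ A := hsummc2.le_tsum i fun j _ => sq_nonneg _
    have h2 : 0 < c i ^ 2 := by positivity
    linarith
  have hBA : B ≤ A * A := by
    have h1 : ∀ i, c i ^ 4 ≤ c i ^ 2 * A := by
      intro i
      have h2 : c i ^ 2 ≤ A := hsummc2.le_tsum i fun j _ => sq_nonneg _
      nlinarith [sq_nonneg (c i)]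
    calc B ≤ ∑' i, c i ^ 2 * A := hsummc4.tsum_le_tsum h1 (hsummc2.mul_right A)
      _ = A * A := by rw [tsum_mul_right]
  -- bound on the fourth moment
  have hm4le : ∫ ω, X ω ^ 4 ∂μ ≤ M * (pq ^ 2 * A ^ 2) := by
    rw [hEX4]
    have hinv : pq * (1 / pq) = 1 := by field_simp
    by_cases hcase : 0 ≤ 1 - 6 * pq
    · have h1 : pq * (1 - 6 * pq) * B ≤ pq * (1 - 6 * pq) * (A * A) := by
        apply mul_le_mul_of_nonneg_left hBA (by positivity)
      have h2 : pq * (1 - 6 * pq) * (A * A) + 3 * pq ^ 2 * A ^ 2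
          = (1 / pq - 3) * (pq ^ 2 * A ^ 2) := by
        field_simp
        ring
      have h3 : (1 / pq - 3) * (pq ^ 2 * A ^ 2) ≤ M * (pq ^ 2 * A ^ 2) :=
        mul_le_mul_of_nonneg_right hMge (by positivity)
      linarith
    · push_neg at hcase
      have h1 : pq * (1 - 6 * pq) * B ≤ 0 := by
        apply mul_nonpos_of_nonpos_of_nonneg _ hBnn
        nlinarith
      have h3 : 3 * (pq ^ 2 * A ^ 2) ≤ M * (pq ^ 2 * A ^ 2) :=
        mul_le_mul_of_nonneg_right hM3 (by positivity)
      nlinarith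
  -- apply the Paley–Zygmund type inequality
  set τ := (μ {ω | X ω < 0}).toReal with hτdef
  have hτnn : 0 ≤ τ := ENNReal.toReal_nonneg
  have hPZ : κ * (pq * A) ^ 2 ≤ (∫ ω, X ω ^ 4 ∂μ) * τ := by
    have := pz_ineq μ hXmeas hXbd hEX1
    rwa [hEX2, ← hκdef, ← hτdef] at this
  have hm4τ : (∫ ω, X ω ^ 4 ∂μ) * τ ≤ M * (pq ^ 2 * A ^ 2) * τ :=
    mul_le_mul_of_nonneg_right hm4le hτnn
  have hκM : κ ≤ M * τ := by
    have hfac : 0 < pq ^ 2 * A ^ 2 := by positivity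
    have h1 : κ * (pq ^ 2 * A ^ 2) ≤ (M * τ) * (pq ^ 2 * A ^ 2) := by nlinarith
    exact le_of_mul_le_mul_right h1 hfac
  have hMpos : (0:ℝ) < M := lt_of_lt_of_le (by norm_num) hM3
  have hδτ : κ / M ≤ τ := (div_le_iff₀ hMpos).mpr (by linarith [mul_comm M τ])
  -- relate the two events
  have hEmeas : MeasurableSet {ω | p ≤ S ω} := measurableSet_le measurable_const hSmeas
  have hcompl : {ω | X ω < 0} = {ω | p ≤ S ω}ᶜ := by
    ext ω
    simp only [hXdef, Set.mem_setOf_eq, Set.mem_compl_iff, not_le, sub_neg]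
  have hsum1 : (μ {ω | p ≤ S ω}).toReal + τ = 1 := by
    rw [hτdef, hcompl, ← ENNReal.toReal_add (measure_ne_top μ _) (measure_ne_top μ _),
      measure_add_measure_compl hEmeas, measure_univ, ENNReal.toReal_one]
  show (μ {ω | p ≤ S ω}).toReal ≤ 1 - κ / M
  linarith

/-- **Upper bound on `π(p,p)` via a Paley–Zygmund type inequality.** For `0 < p < 1`,
`π(p,p) ≤ 1 - (2√3 - 3) / max 3 (1/(p(1-p)) - 3)`; in particular `π(p,p) < 1`. -/
theorem pi_diagonal_lt_one {Ω : Type*} [MeasurableSpace Ω]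
    (μ : Measure Ω) [IsProbabilityMeasure μ] (p : ℝ) (hp0 : 0 < p) (hp1 : p < 1)
    (β : ℕ → Ω → ℝ) (hmeas : ∀ i, Measurable (β i))
    (hval : ∀ i ω, β i ω = 0 ∨ β i ω = 1)
    (hβp : ∀ i, μ {ω | β i ω = 1} = ENNReal.ofReal p)
    (hindep : iIndepFun β μ) :
    sSup {r : ℝ | ∃ c : ℕ → ℝ, (∀ i, 0 ≤ c i) ∧ (∑' i, c i) = 1 ∧
        r = (μ {ω | p ≤ ∑' i, c i * β i ω}).toReal} ≤
      1 - (2 * Real.sqrt 3 - 3) / max 3 (1 / (p * (1 - p)) - 3) ∧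
    sSup {r : ℝ | ∃ c : ℕ → ℝ, (∀ i, 0 ≤ c i) ∧ (∑' i, c i) = 1 ∧
        r = (μ {ω | p ≤ ∑' i, c i * β i ω}).toReal} < 1 := by
  have h3 : (Real.sqrt 3) ^ 2 = 3 := Real.sq_sqrt (by norm_num)
  have h3pos : (1:ℝ) < Real.sqrt 3 := by nlinarith [Real.sqrt_nonneg 3]
  have h3lt : Real.sqrt 3 < 2 := by nlinarith [Real.sqrt_nonneg 3]
  have hκpos : 0 < 2 * Real.sqrt 3 - 3 := by nlinarith [Real.sqrt_nonneg 3]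
  have hκlt : 2 * Real.sqrt 3 - 3 < 1 := by linarith
  have hM3 : (3:ℝ) ≤ max 3 (1 / (p * (1 - p)) - 3) := le_max_left _ _
  have hMpos : (0:ℝ) < max 3 (1 / (p * (1 - p)) - 3) := by linarith
  have hδpos : 0 < (2 * Real.sqrt 3 - 3) / max 3 (1 / (p * (1 - p)) - 3) :=
    div_pos hκpos hMpos
  have hδlt : (2 * Real.sqrt 3 - 3) / max 3 (1 / (p * (1 - p)) - 3) ≤ 1 / 3 := by
    rw [div_le_div_iff₀ hMpos (by norm_num)]
    nlinarith
  have hle : sSup {r : ℝ | ∃ c : ℕ → ℝ, (∀ i, 0 ≤ c i) ∧ (∑' i, c i) = 1 ∧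
      r = (μ {ω | p ≤ ∑' i, c i * β i ω}).toReal} ≤
      1 - (2 * Real.sqrt 3 - 3) / max 3 (1 / (p * (1 - p)) - 3) := by
    apply Real.sSup_le
    · rintro r ⟨c, hc0, hcsum, rfl⟩
      exact pi_key μ p hp0 hp1 β hmeas hval hβp hindep c hc0 hcsum
    · linarith
  exact ⟨hle, lt_of_le_of_lt hle (by linarith)⟩
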